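/- Let 0 ≤ Γ ≤ Δ < 1 and ψ > 0 satisfy ψ·(Δ − Γ) ≤ (1 − Δ)². Then the cubic polynomial P(λ) = λ(λ−1)² + ψ·(λ − Γ)(λ − Δ) has no positive real root. -/
import Mathlib


theorem no_positive_root (Γ Δ ψ : ℝ) (hΓ : 0 ≤ Γ) (hΓΔ : Γ ≤ Δ) (hΔ : Δ < 1)
    (hψ : 0 < ψ) (hbound : ψ * (Δ - Γ) ≤ (1 - Δ) ^ 2) :
    ∀ l : ℝ, 0 < l → l * (l - 1) ^ 2 + ψ * (l - Γ) * (l - Δ) ≠ 0 := by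
  intro l hl h
  rcases le_or_gt l Γ with hc | hc
  · nlinarith [mul_pos hl (mul_pos (show (0:ℝ) < 1 - l by linarith) (show (0:ℝ) < 1 - l by linarith)),
      mul_nonneg hψ.le (mul_nonneg (sub_nonneg.2 hc) (sub_nonneg.2 (hc.trans hΓΔ)))]
  · rcases le_or_gt Δ l with hd | hd
    · rcases lt_or_ge l 1 with h1 | h1
      · nlinarith [mul_pos hl (mul_pos (show (0:ℝ) < 1 - l by linarith) (show (0:ℝ) < 1 - l by linarith)),
          mul_nonneg hψ.le (mul_nonneg (by linarith : (0:ℝ) ≤ l - Γ) (sub_nonneg.2 hd))]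
      · nlinarith [mul_nonneg hl.le (sq_nonneg (l - 1)),
          mul_pos hψ (mul_pos (by linarith : (0:ℝ) < l - Γ) (by linarith : (0:ℝ) < l - Δ))]
    · nlinarith [mul_nonneg hψ.le (add_nonneg (sq_nonneg (l - Γ)) (mul_nonneg hΓ (sub_nonneg.2 hΓΔ))),
        mul_le_mul_of_nonneg_right hbound hl.le,
        mul_pos (mul_pos (sub_pos.2 hd) (show (0:ℝ) < 2 - Δ - l by linarith)) hl]
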